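/- Let α be a generator of F_{q^m}^× with companion matrix M ∈ F_q^{m×m} of its minimal polynomial over F_q, and let Γ be the basis {1, α, …, α^{m-1}}. For 1 ≤ s ≤ m−1, every nonzero matrix in the F_q-span of {Y_s M^i : 0 ≤ i ≤ m−1} has rank exactly s, where Y_s = (I_s | 0) ∈ F_q^{s×m}. -/

import Mathlib

open Matrix

/-- The companion matrix of `x^m - a_m x^{m-1} - ⋯ - a_2 x - a_1`, whose bottom row is
`(a_1, …, a_m)` and which has ones on the superdiagonal. -/
def companionMat {K : Type*} [Field K] {m : ℕ} (a : Fin m → K) : Matrix (Fin m) (Fin m) K :=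
  Matrix.of fun i j => if (i : ℕ) + 1 = m then a j else if (j : ℕ) = (i : ℕ) + 1 then 1 else 0

/-- The matrix `Y_s = (I_s | 0) ∈ K^{s×m}`. -/
def Ys (K : Type*) [Field K] (s m : ℕ) : Matrix (Fin s) (Fin m) K :=
  Matrix.of fun i j => if (i : ℕ) = (j : ℕ) then 1 else 0

lemma Ys_mul_transpose {K : Type*} [Field K] {s m : ℕ} (h : s ≤ m) :
    Ys K s m * (Ys K s m)ᵀ = 1 := by
  ext i k
  rw [Matrix.mul_apply, Finset.sum_eq_single (⟨(i : ℕ), lt_of_lt_of_le i.isLt h⟩ : Fin m)]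
  · simp [Ys, Matrix.one_apply, Fin.ext_iff, eq_comm]
  · intro j _ hj
    simp only [Ys, Matrix.transpose_apply, Matrix.of_apply, ite_mul, one_mul, zero_mul]
    split_ifs with h1 h2
    · exact absurd (Fin.ext h1.symm) hj
    · exact absurd (Fin.ext h1.symm) hj
    · rfl
  · intro hmem; exact absurd (Finset.mem_univ _) hmem

lemma Ys_rank {K : Type*} [Field K] {s m : ℕ} (h : s ≤ m) : (Ys K s m).rank = s := by
  have le1 : (Ys K s m).rank ≤ s := (Matrix.rank_le_card_height _).trans (by simp)
  have le2 : s ≤ (Ys K s m).rank := by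
    have h2 := Matrix.rank_mul_le_left (Ys K s m) (Ys K s m)ᵀ
    rw [Ys_mul_transpose h, Matrix.rank_one] at h2
    simpa using h2
  omega

lemma companion_transpose {K L : Type*} [Field K] [Field L] [Algebra K L] {α : L} {m : ℕ}
    (b : Module.Basis (Fin m) K L) (hb : ∀ i : Fin m, b i = α ^ (i : ℕ))
    (hpow : α ^ m = ∑ j : Fin m, (-(minpoly K α).coeff j) • α ^ (j : ℕ)) :
    companionMat (fun j : Fin m => -(minpoly K α).coeff j) = (Algebra.leftMulMatrix b α)ᵀ := by
  ext i j
  rw [Matrix.transpose_apply, Algebra.leftMulMatrix_eq_repr_mul, hb i, ← pow_succ']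
  by_cases h : (i : ℕ) + 1 = m
  · rw [h, hpow]
    have hsum : ∑ j : Fin m, (-(minpoly K α).coeff j) • α ^ (j : ℕ)
        = ∑ j : Fin m, (-(minpoly K α).coeff j) • b j := by
      simp_rw [hb]
    rw [hsum, b.repr_sum_self]
    simp [companionMat, h]
  · have hlt : (i : ℕ) + 1 < m := lt_of_le_of_ne i.isLt h
    have hbb : α ^ ((i : ℕ) + 1) = b ⟨(i : ℕ) + 1, hlt⟩ := (hb ⟨(i : ℕ) + 1, hlt⟩).symm
    rw [hbb, b.repr_self]
    simp only [companionMat, Matrix.of_apply, Finsupp.single_apply, Fin.ext_iff]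
    rw [if_neg h]
    simp [eq_comm]

lemma pow_deg_eq_sum {K L : Type*} [Field K] [Field L] [Algebra K L] {α : L}
    (hint : IsIntegral K α) {m : ℕ} (hdeg : (minpoly K α).natDegree = m) :
    α ^ m = ∑ j : Fin m, (-(minpoly K α).coeff j) • α ^ (j : ℕ) := by
  have h0 := minpoly.aeval K α
  rw [Polynomial.aeval_eq_sum_range, hdeg, Finset.sum_range_succ] at h0
  have hc : (minpoly K α).coeff m = 1 := by
    have := (minpoly.monic hint).coeff_natDegree
    rwa [hdeg] at this
  rw [hc, one_smul] at h0
  have h1 : α ^ m = ∑ i ∈ Finset.range m, (-(minpoly K α).coeff i) • α ^ i := by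
    have := eq_neg_of_add_eq_zero_right h0
    rw [this, ← Finset.sum_neg_distrib]
    simp [neg_smul]
  rw [h1, ← Fin.sum_univ_eq_sum_range (fun i => (-(minpoly K α).coeff i) • α ^ i) m]

/-- `L = F_{q^m}` is a degree-`m` extension of the finite field `K = F_q`, `α` generates
`Lˣ`, and `M` is the companion matrix of the minimal polynomial of `α` over `K` (the bottom
row consists of the negated coefficients).  Every nonzero matrix in the `K`-span of
`{Y_s M^i : 0 ≤ i ≤ m-1}` has rank exactly `s`. -/
theorem stmt17 {K L : Type*} [Field K] [Field L] [Algebra K L] [Fintype K] [Fintype L]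
    {m : ℕ} (hm : Module.finrank K L = m) (α : L)
    (hα : ∀ x : L, x ≠ 0 → ∃ n : ℕ, α ^ n = x)
    (s : ℕ) (hs1 : 1 ≤ s) (hsm : s ≤ m - 1) :
    ∀ N ∈ Submodule.span K {X : Matrix (Fin s) (Fin m) K |
        ∃ i < m, X = Ys K s m * (companionMat fun j : Fin m => -(minpoly K α).coeff j) ^ i},
      N ≠ 0 → N.rank = s := by
  classical
  have hsle : s ≤ m := by omega
  have hfin : Module.Finite K L := Module.finite_iff_finite.mpr inferInstance
  have hint : IsIntegral K α := IsIntegral.of_finite K α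
  have hadj : IntermediateField.adjoin K {α} = ⊤ := by
    rw [eq_top_iff]
    intro x _
    by_cases hx : x = 0
    · exact hx ▸ zero_mem _
    · obtain ⟨n, rfl⟩ := hα x hx
      exact pow_mem (IntermediateField.mem_adjoin_simple_self K α) n
  let e : (IntermediateField.adjoin K {α} : IntermediateField K L) ≃ₐ[K] L :=
    (IntermediateField.equivOfEq hadj).trans IntermediateField.topEquiv
  let pb := (IntermediateField.adjoin.powerBasis hint).map e
  have hgen : pb.gen = α := rfl
  have hdim : pb.dim = m := pb.finrank.symm.trans hm
  have hdeg : (minpoly K α).natDegree = m := hdim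
  let b : Module.Basis (Fin m) K L := pb.basis.reindex (finCongr hdim)
  have hb : ∀ i : Fin m, b i = α ^ (i : ℕ) := by
    intro i
    rw [show b i = pb.basis ((finCongr hdim).symm i) from Module.Basis.reindex_apply _ _ _,
      pb.basis_eq_pow, hgen]
    rfl
  have hM : (companionMat fun j : Fin m => -(minpoly K α).coeff j)
      = (Algebra.leftMulMatrix b α)ᵀ :=
    companion_transpose b hb (pow_deg_eq_sum hint hdeg)
  let ψ : L →ₗ[K] Matrix (Fin s) (Fin m) K :=
    { toFun := fun y => Ys K s m * (Algebra.leftMulMatrix b y)ᵀ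
      map_add' := by intro x y; simp [map_add, Matrix.transpose_add, Matrix.mul_add]
      map_smul' := by intro c x; simp [_root_.map_smul, Matrix.transpose_smul, Matrix.mul_smul] }
  have hsub : Submodule.span K {X : Matrix (Fin s) (Fin m) K |
        ∃ i < m, X = Ys K s m * (companionMat fun j : Fin m => -(minpoly K α).coeff j) ^ i}
      ≤ LinearMap.range ψ := by
    rw [Submodule.span_le]
    rintro X ⟨i, -, rfl⟩
    refine ⟨α ^ i, ?_⟩
    show Ys K s m * (Algebra.leftMulMatrix b (α ^ i))ᵀ = _
    rw [hM, ← Matrix.transpose_pow, ← map_pow]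
  intro N hN hN0
  obtain ⟨y, rfl⟩ := hsub hN
  have hy : y ≠ 0 := by
    rintro rfl
    exact hN0 (map_zero ψ)
  have hdet : IsUnit ((Algebra.leftMulMatrix b y)ᵀ).det := by
    rw [Matrix.det_transpose]
    exact (Matrix.isUnit_iff_isUnit_det _).mp
      ((isUnit_iff_ne_zero.mpr hy).map (Algebra.leftMulMatrix b))
  show (Ys K s m * (Algebra.leftMulMatrix b y)ᵀ).rank = s
  rw [Matrix.rank_mul_eq_left_of_isUnit_det _ _ hdet, Ys_rank hsle]
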